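/- Let (A, ⊗, 1) be an abelian Q-linear category with an exact symmetric monoidal structure, and suppose every object of A is dualizable (A is rigid). If the endomorphism ring End(1) of the unit object is an integral domain, then End(1) is a field. -/

import Mathlib

set_option linter.unusedSectionVars false

open CategoryTheory CategoryTheory.Limits CategoryTheory.MonoidalCategory

section Stmt0Aux

variable {C : Type*} [Category C] [Abelian C]
    [MonoidalCategory C] [SymmetricCategory C]
    [∀ X : C, PreservesFiniteLimits (tensorLeft X)]
    [∀ X : C, PreservesFiniteColimits (tensorLeft X)]
    [RigidCategory C]

/-- `tensorLeft K` is a left adjoint (rigidity). -/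
instance stmt0_tensorLeft_isLeftAdjoint (K : C) : (tensorLeft K).IsLeftAdjoint :=
  ⟨tensorLeft (ᘁK), ⟨tensorLeftAdjunction (ᘁK) K⟩⟩

/-- Sliding a "scalar" through the unit. -/
lemma stmt0_slide {A B : C} (u : A ⟶ 𝟙_ C) (h : 𝟙_ C ⟶ B) :
    u ≫ h = (ρ_ A).inv ≫ A ◁ h ≫ u ▷ B ≫ (λ_ B).hom := by
  conv_rhs => rw [← Category.assoc (A ◁ h), whisker_exchange, Category.assoc,
    MonoidalCategory.leftUnitor_naturality, unitors_equal,
    MonoidalCategory.rightUnitor_naturality_assoc, Iso.inv_hom_id_assoc]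

/-- Commutativity of `End (𝟙_ C)`. -/
lemma stmt0_end_comm (f g : End (𝟙_ C)) : f ≫ g = g ≫ f := by
  have h := whisker_exchange (f : 𝟙_ C ⟶ 𝟙_ C) (g : 𝟙_ C ⟶ 𝟙_ C)
  have hf : (f : 𝟙_ C ⟶ 𝟙_ C) ▷ 𝟙_ C = (ρ_ (𝟙_ C)).hom ≫ f ≫ (ρ_ (𝟙_ C)).inv := by
    rw [← MonoidalCategory.rightUnitor_naturality_assoc]; simp
  have hg : (𝟙_ C) ◁ (g : 𝟙_ C ⟶ 𝟙_ C) = (λ_ (𝟙_ C)).hom ≫ g ≫ (λ_ (𝟙_ C)).inv := by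
    rw [← MonoidalCategory.leftUnitor_naturality_assoc]; simp
  rw [hf, hg, unitors_equal, unitors_inv_equal] at h
  simp only [Category.assoc, Iso.inv_hom_id_assoc] at h
  have h2 := (cancel_epi (ρ_ (𝟙_ C)).hom).mp h
  rw [← Category.assoc, ← Category.assoc] at h2
  exact ((cancel_mono (ρ_ (𝟙_ C)).inv).mp h2).symm

/-- Key lemma: every monomorphism into the unit object splits. -/
theorem stmt0_split {K : C} (ι : K ⟶ 𝟙_ C) [Mono ι] :
    ∃ r : 𝟙_ C ⟶ K, ι ≫ r = 𝟙 K := by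
  classical
  set Q : C := cokernel ι with hQ
  set q : 𝟙_ C ⟶ Q := cokernel.π ι with hq
  have h0 : (K ◁ q) ≫ (ι ▷ Q) = 0 := by
    rw [whisker_exchange]
    have h1 : ι ▷ (𝟙_ C) = (ρ_ K).hom ≫ ι ≫ (ρ_ (𝟙_ C)).inv := by
      rw [← MonoidalCategory.rightUnitor_naturality_assoc]; simp
    have h2 : (𝟙_ C) ◁ q = (λ_ (𝟙_ C)).hom ≫ q ≫ (λ_ Q).inv := by
      rw [← MonoidalCategory.leftUnitor_naturality_assoc]; simp
    rw [h1, h2, unitors_equal]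
    simp only [Category.assoc, Iso.inv_hom_id_assoc]
    rw [hq, cokernel.condition_assoc, zero_comp]
    simp
  have hKq : Epi (K ◁ q) := by
    have : K ◁ q = (tensorLeft K).map q := rfl
    rw [this]; infer_instance
  have hQιM : Mono (Q ◁ ι) := by
    have : Q ◁ ι = (tensorLeft Q).map ι := rfl
    rw [this]; infer_instance
  have hιQ : Mono (ι ▷ Q) := by
    have h3 : ι ▷ Q = (β_ K Q).hom ≫ (Q ◁ ι) ≫ (β_ (𝟙_ C) Q).inv := by
      rw [← BraidedCategory.braiding_naturality_left_assoc]; simp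
    rw [h3]
    exact mono_comp _ _
  have hι0 : ι ▷ Q = 0 := by
    rw [← cancel_epi (K ◁ q), h0, comp_zero]
  have hKQ : IsZero (K ⊗ Q) := IsZero.of_mono_eq_zero _ hι0
  set b : K ⊗ K ⟶ K := (K ◁ ι) ≫ (ρ_ K).hom with hbdef
  have hKι : Mono (K ◁ ι) := by
    have : K ◁ ι = (tensorLeft K).map ι := rfl
    rw [this]; infer_instance
  have hKιepi : Epi (K ◁ ι) := by
    have hz : IsZero (cokernel ((tensorLeft K).map ι)) :=
      hKQ.of_iso (PreservesCokernel.iso (tensorLeft K) ι).symm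
    have hπ : cokernel.π ((tensorLeft K).map ι) = 0 := hz.eq_zero_of_tgt _
    have : Epi ((tensorLeft K).map ι) := Abelian.epi_of_cokernel_π_eq_zero _ hπ
    exact this
  have hbmono : Mono b := mono_comp _ _
  have hbepi : Epi b := epi_comp _ _
  have hbiso : IsIso b := isIso_of_mono_of_epi b
  have hcomm : (ι ▷ K) ≫ (λ_ K).hom = b := by
    rw [hbdef, ← cancel_mono ι]
    simp only [Category.assoc]
    rw [← MonoidalCategory.leftUnitor_naturality, ← MonoidalCategory.rightUnitor_naturality]
    rw [← Category.assoc, ← Category.assoc, ← whisker_exchange, unitors_equal]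
  have hbLiso : IsIso ((ι ▷ K) ≫ (λ_ K).hom) := by rw [hcomm]; exact hbiso
  set c : K ⟶ K ⊗ K := inv ((ι ▷ K) ≫ (λ_ K).hom) with hcdef
  have hstar : c ≫ (ι ▷ K) = (λ_ K).inv := by
    rw [← cancel_mono (λ_ K).hom]
    simp [hcdef]
  set η : 𝟙_ C ⟶ K ⊗ Kᘁ := ExactPairing.coevaluation K (Kᘁ) with hη
  set ε : Kᘁ ⊗ K ⟶ 𝟙_ C := ExactPairing.evaluation K (Kᘁ) with hε
  set ε' : K ⊗ Kᘁ ⟶ 𝟙_ C := (β_ K (Kᘁ)).hom ≫ ε with hε'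
  set r : 𝟙_ C ⟶ K :=
    η ≫ (c ▷ Kᘁ) ≫ (α_ K K (Kᘁ)).hom ≫ (K ◁ ε') ≫ (ρ_ K).hom with hrdef
  refine ⟨r, ?_⟩
  have hCL : r ≫ ι = η ≫ ε' := by
    rw [hrdef]
    simp only [Category.assoc]
    rw [← MonoidalCategory.rightUnitor_naturality]
    rw [← Category.assoc (K ◁ ε'), whisker_exchange]
    simp only [Category.assoc]
    rw [← MonoidalCategory.associator_naturality_left_assoc]
    rw [← comp_whiskerRight_assoc, hstar]
    rw [← Category.assoc ((λ_ K).inv ▷ _), ← MonoidalCategory.leftUnitor_tensor_inv]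
    rw [← unitors_equal, MonoidalCategory.leftUnitor_naturality]
    simp
  have hb2 : b = (β_ K K).hom ≫ (ι ▷ K) ≫ (λ_ K).hom := by
    rw [← BraidedCategory.braiding_naturality_right_assoc, braiding_tensorUnit_right]
    simp [hbdef]
  have hββ : (β_ K K).hom ≫ b = b := by
    conv_lhs => rw [← hcomm]
    rw [← hb2]
  have hstep5 : ι ≫ r = (λ_ K).inv ≫ ((η ≫ ε') ▷ K) ≫ (λ_ K).hom := by
    have h1 : ι ≫ r = (ρ_ K).inv ≫ (K ◁ r) ≫ (ι ▷ K) ≫ (λ_ K).hom := stmt0_slide ι r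
    rw [h1, hcomm, ← hββ, BraidedCategory.braiding_naturality_right_assoc,
      braiding_tensorUnit_right]
    simp only [Category.assoc, Iso.inv_hom_id_assoc]
    rw [← hcomm, ← comp_whiskerRight_assoc, hCL]
  have hcoh : (α_ K (Kᘁ : C) (𝟙_ C)).hom ≫ (K ◁ ((ρ_ (Kᘁ : C)).hom ≫ (λ_ (Kᘁ : C)).inv)) ≫
      (α_ K (𝟙_ C) (Kᘁ : C)).inv ≫ ((ρ_ K).hom ▷ (Kᘁ : C)) = (ρ_ (K ⊗ (Kᘁ : C))).hom := by
    simp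
  have hA : ((K ⊗ Kᘁ) ◁ ι) ≫ (ρ_ (K ⊗ (Kᘁ : C))).hom =
      (α_ K (Kᘁ) K).hom ≫ (K ◁ (β_ (Kᘁ : C) K).hom) ≫ (α_ K K (Kᘁ)).inv ≫ (b ▷ (Kᘁ : C)) := by
    rw [hbdef, comp_whiskerRight]
    rw [← MonoidalCategory.associator_inv_naturality_middle_assoc]
    rw [← MonoidalCategory.whiskerLeft_comp_assoc]
    rw [← BraidedCategory.braiding_naturality_right]
    rw [MonoidalCategory.whiskerLeft_comp_assoc]
    rw [← MonoidalCategory.associator_naturality_right_assoc]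
    rw [braiding_tensorUnit_right, hcoh]
  have hT : ((K ⊗ Kᘁ) ◁ ι) ≫ (ρ_ (K ⊗ (Kᘁ : C))).hom ≫ ε' =
      (α_ K (Kᘁ) K).hom ≫ (K ◁ ε) ≫ (ρ_ K).hom ≫ ι := by
    rw [← Category.assoc, hA]
    simp only [Category.assoc]
    rw [← hcomm, comp_whiskerRight]
    simp only [Category.assoc]
    rw [← MonoidalCategory.associator_inv_naturality_left_assoc]
    rw [← Category.assoc (α_ (𝟙_ C) K (Kᘁ : C)).inv, ← MonoidalCategory.leftUnitor_tensor_hom]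
    rw [← MonoidalCategory.leftUnitor_naturality]
    rw [← Category.assoc (ι ▷ _), ← whisker_exchange, Category.assoc, unitors_equal,
      MonoidalCategory.rightUnitor_naturality]
    rw [← MonoidalCategory.whiskerLeft_comp_assoc, hε']
    simp only [SymmetricCategory.symmetry_assoc]
  have hfinal : ((λ_ K).inv ≫ ((η ≫ ε') ▷ K) ≫ (λ_ K).hom) ≫ ι = ι := by
    simp only [comp_whiskerRight, Category.assoc]
    rw [← MonoidalCategory.leftUnitor_naturality]
    rw [← Category.assoc (ε' ▷ K), ← whisker_exchange, Category.assoc, unitors_equal,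
      MonoidalCategory.rightUnitor_naturality]
    rw [hT, hη, hε, ExactPairing.evaluation_coevaluation_assoc]
    simp
  rw [hstep5, ← cancel_mono ι, hfinal, Category.id_comp]

end Stmt0Aux

/-- In an abelian ℚ-linear rigid symmetric monoidal category with exact
tensor product, if `End (𝟙_ C)` is an integral domain then it is a field. -/
theorem stmt0 (C : Type*) [Category C] [Abelian C] [Linear ℚ C]
    [MonoidalCategory C] [SymmetricCategory C]
    [∀ X : C, PreservesFiniteLimits (tensorLeft X)]
    [∀ X : C, PreservesFiniteColimits (tensorLeft X)]
    [RigidCategory C]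
    (hdom : IsDomain (End (𝟙_ C))) :
    IsField (End (𝟙_ C)) := by
  classical
  have hcomm : ∀ a b : End (𝟙_ C), a * b = b * a := by
    intro a b
    rw [End.mul_def, End.mul_def]
    exact stmt0_end_comm b a
  refine ⟨exists_pair_ne _, hcomm, ?_⟩
  intro a ha
  -- idempotent helper
  have key : ∀ {K : C} (j : K ⟶ 𝟙_ C), Mono j → (∀ s : 𝟙_ C ⟶ K, s ≫ j ≠ 𝟙 (𝟙_ C)) →
      IsZero K := by
    intro K j hj hno
    haveI := hj
    obtain ⟨r, hr⟩ := stmt0_split j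
    set e : End (𝟙_ C) := r ≫ j with he
    have hee : e * e = e := by
      rw [End.mul_def, he]
      rw [Category.assoc, ← Category.assoc j, hr, Category.id_comp]
    have he0 : e = 0 := by
      rcases mul_eq_zero.mp (show e * (1 - e) = 0 by
        rw [mul_sub, mul_one, hee, sub_self]) with h | h
      · exact h
      · exfalso
        apply hno r
        have : e = 1 := by linear_combination (norm := abel) -h
        rw [he] at this
        exact this
    rw [IsZero.iff_id_eq_zero]
    calc 𝟙 K = (j ≫ r) ≫ (j ≫ r) := by rw [hr]; simp
      _ = j ≫ (r ≫ j) ≫ r := by simp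
      _ = 0 := by
          rw [← he, he0]
          simp
  -- a is a monomorphism
  have hmono : Mono (a : 𝟙_ C ⟶ 𝟙_ C) := by
    have : IsZero (kernel (a : 𝟙_ C ⟶ 𝟙_ C)) := by
      apply key (kernel.ι a) inferInstance
      intro s hs
      apply ha
      calc a = (s ≫ kernel.ι a) ≫ a := by rw [hs]; simp [End.one_def]
        _ = s ≫ (kernel.ι a ≫ a) := by simp
        _ = 0 := by rw [kernel.condition]; simp
    apply Abelian.mono_of_kernel_ι_eq_zero
    exact this.eq_zero_of_src _
  -- a is an epimorphism
  have hepi : Epi (a : 𝟙_ C ⟶ 𝟙_ C) := by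
    by_cases hI : ∃ s : 𝟙_ C ⟶ Abelian.image (a : 𝟙_ C ⟶ 𝟙_ C),
        s ≫ Abelian.image.ι a = 𝟙 (𝟙_ C)
    · obtain ⟨s, hs⟩ := hI
      have : Epi (Abelian.image.ι (a : 𝟙_ C ⟶ 𝟙_ C)) :=
        ⟨fun u v huv => by
          rw [← Category.id_comp u, ← Category.id_comp v, ← hs]
          simp only [Category.assoc, huv]⟩
      rw [← Abelian.image.fac (a : 𝟙_ C ⟶ 𝟙_ C)]
      exact epi_comp _ _
    · exfalso
      push_neg at hI
      have hz : IsZero (Abelian.image (a : 𝟙_ C ⟶ 𝟙_ C)) :=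
        key (Abelian.image.ι a) inferInstance hI
      apply ha
      calc a = Abelian.factorThruImage a ≫ Abelian.image.ι a :=
            (Abelian.image.fac _).symm
        _ = Abelian.factorThruImage a ≫ 𝟙 _ ≫ Abelian.image.ι a := by simp
        _ = 0 := by rw [hz.eq_zero_of_src (𝟙 _)]; simp
  haveI := hmono; haveI := hepi
  have hiso : IsIso (a : 𝟙_ C ⟶ 𝟙_ C) := isIso_of_mono_of_epi a
  refine ⟨inv (a : 𝟙_ C ⟶ 𝟙_ C), ?_⟩
  rw [End.mul_def, End.one_def]
  exact IsIso.inv_hom_id a
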